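/- arXiv:1401.1693 — 3 statements merged into one kernel-verified Lean document; each statement's English description precedes it below -/
import Mathlib

section
/- In any parity game, every position p is either in W₀ or in W₁ (the winning sets of the two players are a partition of all positions), and for each i ∈ {0,1}, player i wins positionally from every position in Wᵢ, i.e. there is a positional strategy for player i that wins from every position of Wᵢ against every strategy of the other player. -/
set_option maxHeartbeats 1000000

namespace MuCalc

attribute [local instance] Classical.propDecidable

/-- μ-calculus formulas. -/
inductive Formula (Var : Type*) (Prp : Type*) (Act : Type*) where
  | var : Var → Formula Var Prp Act
  | prop : Prp → Formula Var Prp Act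
  | dia : Act → Formula Var Prp Act → Formula Var Prp Act
  | box : Act → Formula Var Prp Act → Formula Var Prp Act
  | and : Formula Var Prp Act → Formula Var Prp Act → Formula Var Prp Act
  | or : Formula Var Prp Act → Formula Var Prp Act → Formula Var Prp Act
  | mu : Var → Formula Var Prp Act → Formula Var Prp Act
  | nu : Var → Formula Var Prp Act → Formula Var Prp Act

namespace Formula

variable {Var Prp Act : Type*}

/-- Free variables. -/
noncomputable def FV : Formula Var Prp Act → Finset Var
  | var X => {X}
  | prop _ => ∅
  | dia _ φ => FV φ
  | box _ φ => FV φ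
  | and φ ψ => FV φ ∪ FV ψ
  | or φ ψ => FV φ ∪ FV ψ
  | mu X φ => FV φ \ {X}
  | nu X φ => FV φ \ {X}

/-- Substitution of a formula for the free occurrences of a variable. -/
noncomputable def subst : Formula Var Prp Act → Var → Formula Var Prp Act → Formula Var Prp Act
  | var Y, X, ρ => if Y = X then ρ else var Y
  | prop P, _, _ => prop P
  | dia a φ, X, ρ => dia a (subst φ X ρ)
  | box a φ, X, ρ => box a (subst φ X ρ)
  | and φ ψ, X, ρ => and (subst φ X ρ) (subst ψ X ρ)
  | or φ ψ, X, ρ => or (subst φ X ρ) (subst ψ X ρ)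
  | mu Y φ, X, ρ => if Y = X then mu Y φ else mu Y (subst φ X ρ)
  | nu Y φ, X, ρ => if Y = X then nu Y φ else nu Y (subst φ X ρ)

/-- Nesting depth `nd(X, φ)` of a variable in a formula. -/
noncomputable def ndVar (X : Var) : Formula Var Prp Act → ℕ
  | var _ => 0
  | prop _ => 0
  | dia _ φ => ndVar X φ
  | box _ φ => ndVar X φ
  | and φ ψ => max (ndVar X φ) (ndVar X ψ)
  | or φ ψ => max (ndVar X φ) (ndVar X ψ)
  | mu Y φ => if X ≠ Y ∧ X ∈ FV φ then max (1 + ndVar Y φ) (ndVar X φ) else 0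
  | nu Y φ => if X ≠ Y ∧ X ∈ FV φ then max (1 + ndVar Y φ) (ndVar X φ) else 0

/-- Nesting depth `nd(φ)` of a formula: `nd(QX.φ) = 1 + nd(X,φ)` and `0` otherwise. -/
noncomputable def nd : Formula Var Prp Act → ℕ
  | mu X φ => 1 + ndVar X φ
  | nu X φ => 1 + ndVar X φ
  | _ => 0

/-- The dual of a formula. -/
def dual : Formula Var Prp Act → Formula Var Prp Act
  | var X => var X
  | prop P => prop P
  | dia a φ => box a (dual φ)
  | box a φ => dia a (dual φ)
  | and φ ψ => or (dual φ) (dual ψ)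
  | or φ ψ => and (dual φ) (dual ψ)
  | mu X φ => nu X (dual φ)
  | nu X φ => mu X (dual φ)

/-- A fixpoint formula `QX.φ` with `Q ∈ {μ, ν}`: `fp true = μ`, `fp false = ν`. -/
def fp (q : Bool) (X : Var) (φ : Formula Var Prp Act) : Formula Var Prp Act :=
  if q then mu X φ else nu X φ

/-- The (reflexive, transitive) subformula relation. -/
inductive Subformula : Formula Var Prp Act → Formula Var Prp Act → Prop
  | refl (φ) : Subformula φ φ
  | dia {ρ φ} (a : Act) : Subformula ρ φ → Subformula ρ (dia a φ)
  | box {ρ φ} (a : Act) : Subformula ρ φ → Subformula ρ (box a φ)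
  | and_left {ρ φ ψ} : Subformula ρ φ → Subformula ρ (and φ ψ)
  | and_right {ρ φ ψ} : Subformula ρ ψ → Subformula ρ (and φ ψ)
  | or_left {ρ φ ψ} : Subformula ρ φ → Subformula ρ (or φ ψ)
  | or_right {ρ φ ψ} : Subformula ρ ψ → Subformula ρ (or φ ψ)
  | mu {ρ φ} (X : Var) : Subformula ρ φ → Subformula ρ (mu X φ)
  | nu {ρ φ} (X : Var) : Subformula ρ φ → Subformula ρ (nu X φ)

end Formula

/-- A labelled transition system: a family of total transition relations and
a labelling of states with the atomic propositions true there. -/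
structure LTS (S : Type*) (Prp : Type*) (Act : Type*) where
  trans : Act → S → S → Prop
  total : ∀ a s, ∃ t, trans a s t
  label : S → Set Prp

variable {S Var Prp Act : Type*}

/-- The semantics `⟦φ⟧η ⊆ S`, with least/greatest fixpoints given by Knaster–Tarski. -/
noncomputable def LTS.sem (T : LTS S Prp Act) :
    Formula Var Prp Act → (Var → Set S) → Set S
  | .var X, η => η X
  | .prop P, _ => {s | P ∈ T.label s}
  | .dia a φ, η => {s | ∃ t, T.trans a s t ∧ t ∈ T.sem φ η}
  | .box a φ, η => {s | ∀ t, T.trans a s t → t ∈ T.sem φ η}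
  | .and φ ψ, η => T.sem φ η ∩ T.sem ψ η
  | .or φ ψ, η => T.sem φ η ∪ T.sem ψ η
  | .mu X φ, η => sInf {U : Set S | T.sem φ (Function.update η X U) ⊆ U}
  | .nu X φ, η => sSup {U : Set S | U ⊆ T.sem φ (Function.update η X U)}

/-- A parity game: positions owned by Player 0 and Player 1, a total edge
relation, and a priority function. -/
structure ParityGame (Pos : Type*) where
  owner : Pos → Fin 2
  edge : Pos → Pos → Prop
  total : ∀ p, ∃ q, edge p q
  priority : Pos → ℕ

namespace ParityGame

variable {Pos : Type*}

/-- A strategy for player `i`: given the history (the earlier positions of the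
play, in order) and the current position, pick a move; all prescribed moves
must follow edges when the current position belongs to player `i`. -/
structure Strategy (G : ParityGame Pos) (i : Fin 2) where
  move : List Pos → Pos → Pos
  valid : ∀ h p, G.owner p = i → G.edge p (move h p)

/-- A strategy is positional if its moves only depend on the current position. -/
def Strategy.Positional {G : ParityGame Pos} {i : Fin 2} (σ : G.Strategy i) : Prop :=
  ∀ h h' p, σ.move h p = σ.move h' p

/-- The play determined by a joint move function `f` (history, current ↦ next):
current position together with the history. -/
def playHist (f : List Pos → Pos → Pos) (p : Pos) : ℕ → Pos × List Pos
  | 0 => (p, [])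
  | n + 1 =>
    let q := playHist f p n
    (f q.2 q.1, q.2 ++ [q.1])

/-- The infinite play determined by a joint move function. -/
def play (f : List Pos → Pos → Pos) (p : Pos) (n : ℕ) : Pos :=
  (playHist f p n).1

/-- The joint move function of a strategy for player `i` and a counterstrategy. -/
def Strategy.combine {G : ParityGame Pos} {i : Fin 2} (σ : G.Strategy i)
    (τ : G.Strategy (1 - i)) : List Pos → Pos → Pos :=
  fun h p => if G.owner p = i then σ.move h p else τ.move h p

/-- An infinite sequence of positions is a play if successive positions follow edges. -/
def IsPlay (G : ParityGame Pos) (f : ℕ → Pos) : Prop :=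
  ∀ n, G.edge (f n) (f (n + 1))

/-- The largest priority occurring infinitely often in an infinite play. -/
noncomputable def maxInfPriority (G : ParityGame Pos) (f : ℕ → Pos) : ℕ :=
  sSup {k | {n | G.priority (f n) = k}.Infinite}

/-- Player `i` wins the infinite play `f`: the largest priority occurring
infinitely often has parity `i`. -/
def WinsPlaySeq (G : ParityGame Pos) (i : Fin 2) (f : ℕ → Pos) : Prop :=
  G.maxInfPriority f % 2 = i.val

/-- `σ` (for player `i`) wins the play from `p` against counterstrategy `τ`. -/
def Strategy.WinsAgainst {G : ParityGame Pos} {i : Fin 2} (σ : G.Strategy i)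
    (τ : G.Strategy (1 - i)) (p : Pos) : Prop :=
  G.WinsPlaySeq i (play (σ.combine τ) p)

/-- `σ` is a winning strategy for player `i` from position `p`. -/
def Strategy.WinsFrom {G : ParityGame Pos} {i : Fin 2} (σ : G.Strategy i) (p : Pos) : Prop :=
  ∀ τ : G.Strategy (1 - i), σ.WinsAgainst τ p

/-- Player `i` wins from position `p`. -/
def WinsFrom (G : ParityGame Pos) (i : Fin 2) (p : Pos) : Prop :=
  ∃ σ : G.Strategy i, σ.WinsFrom p

end ParityGame

/-- Ownership of positions in the game `G(T,η)`: opponent (Player 1) moves at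
conjunctions and boxes, proponent (Player 0) everywhere else. -/
def gameOwner : S × Formula Var Prp Act → Fin 2
  | (_, .and _ _) => 1
  | (_, .box _ _) => 1
  | _ => 0

/-- The moves of the game `G(T,η)`. -/
noncomputable def gameMove (T : LTS S Prp Act) :
    S × Formula Var Prp Act → S × Formula Var Prp Act → Prop
  | (s, .or φ ψ), q => q = (s, φ) ∨ q = (s, ψ)
  | (s, .and φ ψ), q => q = (s, φ) ∨ q = (s, ψ)
  | (s, .dia a φ), q => q.2 = φ ∧ T.trans a s q.1
  | (s, .box a φ), q => q.2 = φ ∧ T.trans a s q.1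
  | (s, .mu X φ), q => q = (s, Formula.subst φ X (.mu X φ))
  | (s, .nu X φ), q => q = (s, Formula.subst φ X (.nu X φ))
  | (s, .var X), q => q = (s, .var X)
  | (s, .prop P), q => q = (s, .prop P)

/-- The priorities of the game `G(T,η)`. -/
noncomputable def gamePriority (T : LTS S Prp Act) (η : Var → Set S) :
    S × Formula Var Prp Act → ℕ
  | (_, .mu X φ) => 2 * Formula.nd (Formula.mu X φ) + 1
  | (_, .nu X φ) => 2 * Formula.nd (Formula.nu X φ)
  | (s, .prop P) => if P ∈ T.label s then 0 else 1
  | (s, .var X) => if s ∈ η X then 0 else 1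
  | (_, _) => 0

/-- The parity game `G(T,η)` associated with an LTS `T` and environment `η`. -/
noncomputable def LTS.game (T : LTS S Prp Act) (η : Var → Set S) :
    ParityGame (S × Formula Var Prp Act) where
  owner := gameOwner
  edge := gameMove T
  total := by
    rintro ⟨s, φ⟩
    cases φ with
    | var X => exact ⟨(s, .var X), rfl⟩
    | prop P => exact ⟨(s, .prop P), rfl⟩
    | dia a φ => obtain ⟨t, ht⟩ := T.total a s; exact ⟨(t, φ), rfl, ht⟩
    | box a φ => obtain ⟨t, ht⟩ := T.total a s; exact ⟨(t, φ), rfl, ht⟩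
    | and φ ψ => exact ⟨(s, φ), Or.inl rfl⟩
    | or φ ψ => exact ⟨(s, φ), Or.inl rfl⟩
    | mu X φ => exact ⟨(s, Formula.subst φ X (.mu X φ)), rfl⟩
    | nu X φ => exact ⟨(s, Formula.subst φ X (.nu X φ)), rfl⟩
  priority := gamePriority T η

/-- The advice values `{1, 2, *} ∪ S` of a partial winning strategy. -/
inductive Advice (S : Type*) where
  | one : Advice S
  | two : Advice S
  | star : Advice S
  | state : S → Advice S

/-- A partial strategy: a partial function from positions of `G(T,η)` to advice. -/
def PStrat (S Var Prp Act : Type*) :=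
  S × Formula Var Prp Act → Option (Advice S)

/-- The domain of a partial strategy. -/
def PStrat.dom (sg : PStrat S Var Prp Act) : Set (S × Formula Var Prp Act) :=
  {q | sg q ≠ none}

/-- The move function of the Player-0 strategy induced by a partial strategy:
follow the advice where present (and sensible), move arbitrarily elsewhere. -/
noncomputable def inducedMove (T : LTS S Prp Act) (sg : PStrat S Var Prp Act) :
    S × Formula Var Prp Act → S × Formula Var Prp Act
  | (s, .var X) => (s, .var X)
  | (s, .prop P) => (s, .prop P)
  | (s, .and φ ψ) => (s, φ)
  | (s, .or φ ψ) => if sg (s, .or φ ψ) = some .two then (s, ψ) else (s, φ)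
  | (s, .box a φ) => ((T.total a s).choose, φ)
  | (s, .dia a φ) =>
    if h : ∃ t, sg (s, .dia a φ) = some (.state t) ∧ T.trans a s t then (h.choose, φ)
    else ((T.total a s).choose, φ)
  | (s, .mu X φ) => (s, Formula.subst φ X (.mu X φ))
  | (s, .nu X φ) => (s, Formula.subst φ X (.nu X φ))

/-- The Player-0 strategy induced by a partial strategy. -/
noncomputable def inducedStrategy (T : LTS S Prp Act) (η : Var → Set S)
    (sg : PStrat S Var Prp Act) : (T.game η).Strategy 0 where
  move := fun _ p => inducedMove T sg p
  valid := by
    rintro h ⟨s, φ⟩ _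
    show gameMove T (s, φ) (inducedMove T sg (s, φ))
    cases φ with
    | var X => exact rfl
    | prop P => exact rfl
    | and φ ψ => exact Or.inl rfl
    | or φ ψ =>
      show inducedMove T sg (s, .or φ ψ) = (s, φ) ∨ inducedMove T sg (s, .or φ ψ) = (s, ψ)
      rw [inducedMove]
      split
      · exact Or.inr rfl
      · exact Or.inl rfl
    | box a φ => exact ⟨rfl, (T.total a s).choose_spec⟩
    | dia a φ =>
      show (inducedMove T sg (s, .dia a φ)).2 = φ ∧ T.trans a s (inducedMove T sg (s, .dia a φ)).1
      rw [inducedMove]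
      split
      next hh => exact ⟨rfl, hh.choose_spec.2⟩
      next => exact ⟨rfl, (T.total a s).choose_spec⟩
    | mu X φ => exact rfl
    | nu X φ => exact rfl

/-- A partial winning strategy for the game `G(T,η)` (conditions STAR, OR, DIA, WIN). -/
structure IsPWS (T : LTS S Prp Act) (η : Var → Set S) (sg : PStrat S Var Prp Act) : Prop where
  star : ∀ s (φ : Formula Var Prp Act), sg (s, φ) = some .star →
    ∀ q, gameMove T (s, φ) q → sg q ≠ none
  or_one : ∀ s (φ : Formula Var Prp Act), sg (s, φ) = some .one →
    ∃ φ₁ φ₂, φ = Formula.or φ₁ φ₂ ∧ sg (s, φ₁) ≠ none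
  or_two : ∀ s (φ : Formula Var Prp Act), sg (s, φ) = some .two →
    ∃ φ₁ φ₂, φ = Formula.or φ₁ φ₂ ∧ sg (s, φ₂) ≠ none
  dia : ∀ s (φ : Formula Var Prp Act) t, sg (s, φ) = some (.state t) →
    ∃ a ψ, φ = Formula.dia a ψ ∧ T.trans a s t ∧ sg (t, ψ) ≠ none
  win : ∀ q ∈ PStrat.dom sg, (inducedStrategy T η sg).WinsFrom q

/-- The sum `Σ + Σ'` of two partial strategies, preferring the left one. -/
def pwsAdd (sg sg' : PStrat S Var Prp Act) : PStrat S Var Prp Act :=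
  fun q => (sg q).orElse (fun _ => sg' q)

/-- The substitution-composition `Σ[X:=φ, Σ']` of partial strategies. -/
noncomputable def pwsSubst (sg : PStrat S Var Prp Act) (X : Var)
    (φ : Formula Var Prp Act) (sg' : PStrat S Var Prp Act) : PStrat S Var Prp Act :=
  fun q =>
    (sg' q).orElse (fun _ =>
      if h : ∃ ψ, q.2 = Formula.subst ψ X φ ∧ sg (q.1, ψ) ≠ none
      then sg (q.1, h.choose) else none)

/-- The instrumented fixpoint iteration `SEM(φ)_η`, computing a partial
winning strategy by fixpoint iteration. -/
noncomputable def SEM [Fintype S] (T : LTS S Prp Act) :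
    Formula Var Prp Act → (Var → Set S) → PStrat S Var Prp Act
  | .var X, η => fun q => if q.2 = Formula.var X ∧ q.1 ∈ η X then some .star else none
  | .prop P, _ => fun q => if q.2 = Formula.prop P ∧ P ∈ T.label q.1 then some .star else none
  | .and φ ψ, η =>
    pwsAdd (SEM T φ η) (pwsAdd (SEM T ψ η)
      (fun q => if q.2 = Formula.and φ ψ ∧ SEM T φ η (q.1, φ) ≠ none ∧ SEM T ψ η (q.1, ψ) ≠ none
        then some .star else none))
  | .or φ ψ, η =>
    pwsAdd (SEM T φ η) (pwsAdd (SEM T ψ η) (pwsAdd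
      (fun q => if q.2 = Formula.or φ ψ ∧ SEM T φ η (q.1, φ) ≠ none then some .one else none)
      (fun q => if q.2 = Formula.or φ ψ ∧ SEM T ψ η (q.1, ψ) ≠ none then some .two else none)))
  | .box a φ, η =>
    pwsAdd (SEM T φ η)
      (fun q => if q.2 = Formula.box a φ ∧ ∀ t, T.trans a q.1 t → SEM T φ η (t, φ) ≠ none
        then some .star else none)
  | .dia a φ, η =>
    pwsAdd (SEM T φ η)
      (fun q =>
        if h : q.2 = Formula.dia a φ ∧ ∃ t, T.trans a q.1 t ∧ SEM T φ η (t, φ) ≠ none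
        then some (.state h.2.choose) else none)
  | .mu X φ, η =>
    (fun sgn : PStrat S Var Prp Act =>
        pwsSubst (SEM T φ (Function.update η X {s | sgn (s, φ) ≠ none}))
          X (Formula.mu X φ) sgn)^[Fintype.card S + 1]
      (fun _ => none)
  | .nu X φ, η =>
    let U := T.sem (Formula.nu X φ) η
    let sg := SEM T φ (Function.update η X U)
    fun q =>
      if q.2 = Formula.nu X φ ∧ q.1 ∈ U then some .star
      else if h : ∃ ψ, ψ ≠ Formula.var X ∧ q.2 = Formula.subst ψ X (Formula.nu X φ) ∧
          sg (q.1, ψ) ≠ none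
      then sg (q.1, h.choose) else none


section PositionalDeterminacy

open ParityGame OrdinalApprox

universe u

variable {Pos : Type u} (G : ParityGame Pos)

private lemma fin2_other {a i : Fin 2} (h : a ≠ i) : a = 1 - i := by revert a i; decide

private lemma fin2_sub_sub (i : Fin 2) : 1 - (1 - i) = i := by revert i; decide

private lemma fin2_cases (i₀ : Fin 2) : ∀ i : Fin 2, i = i₀ ∨ i = 1 - i₀ := by
  revert i₀; decide

/-- Two players cannot both win from the same position. -/
lemma not_winsFrom_both {p : Pos} (h0 : G.WinsFrom 0 p) (h1 : G.WinsFrom 1 p) : False := by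
  obtain ⟨σ, hσ⟩ := h0
  obtain ⟨τ, hτ⟩ := h1
  have hw0 : G.WinsPlaySeq 0 (play (σ.combine τ) p) := hσ τ
  have hw1 : G.WinsPlaySeq 1 (play (τ.combine σ) p) := hτ σ
  have hc : σ.combine τ = τ.combine σ := by
    funext h q
    show (if G.owner q = 0 then σ.move h q else τ.move h q)
       = (if G.owner q = 1 then τ.move h q else σ.move h q)
    rcases fin2_cases 0 (G.owner q) with h' | h'
    · rw [if_pos h', if_neg (by rw [h']; decide)]
    · rw [if_neg (by rw [h']; decide), if_pos (by rw [h']; decide)]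
  rw [hc] at hw0
  unfold ParityGame.WinsPlaySeq at hw0 hw1
  rw [hw0] at hw1
  exact absurd hw1 (by decide)

private lemma infinite_shift_iff (P : ℕ → Prop) (N : ℕ) :
    {n | P (N + n)}.Infinite ↔ {n | P n}.Infinite := by
  constructor
  · intro h
    apply Set.infinite_of_forall_exists_gt
    intro m
    obtain ⟨b, hb, hmb⟩ := h.exists_gt m
    exact ⟨N + b, hb, lt_of_lt_of_le hmb (Nat.le_add_left _ _)⟩
  · intro h
    apply Set.infinite_of_forall_exists_gt
    intro m
    obtain ⟨b, hb, hmb⟩ := h.exists_gt (N + m)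
    refine ⟨b - N, ?_, by omega⟩
    show P (N + (b - N))
    have e : N + (b - N) = b := by omega
    rw [e]; exact hb

private lemma maxInf_shift (f : ℕ → Pos) (N : ℕ) :
    G.maxInfPriority (fun n => f (N + n)) = G.maxInfPriority f := by
  unfold ParityGame.maxInfPriority
  congr 1
  ext k
  simpa using (infinite_shift_iff (fun n => G.priority (f n) = k) N)

lemma winsPlaySeq_shift {i : Fin 2} {f : ℕ → Pos} (N : ℕ)
    (h : G.WinsPlaySeq i fun n => f (N + n)) : G.WinsPlaySeq i f := by
  unfold ParityGame.WinsPlaySeq at h ⊢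
  rwa [maxInf_shift] at h

lemma winsPlaySeq_of_maxpri {i : Fin 2} {f : ℕ → Pos} {d : ℕ} (hd : d % 2 = i.val)
    (hinf : {n | G.priority (f n) = d}.Infinite) (hle : ∀ n, G.priority (f n) ≤ d) :
    G.WinsPlaySeq i f := by
  have hbdd : BddAbove {k | {n | G.priority (f n) = k}.Infinite} := by
    refine ⟨d, fun k hk => ?_⟩
    obtain ⟨n, hn⟩ := hk.nonempty
    exact hn ▸ hle n
  have : G.maxInfPriority f = d := by
    apply le_antisymm
    · apply csSup_le ⟨d, hinf⟩
      intro k hk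
      obtain ⟨n, hn⟩ := hk.nonempty
      exact hn ▸ hle n
    · exact le_csSup hbdd hinf
  unfold ParityGame.WinsPlaySeq
  rw [this, hd]

/-- Winning all plays that stay in `U` and are consistent with the positional function `g`. -/
def PWinsIn (U : Set Pos) (i : Fin 2) (g : Pos → Pos) (p : Pos) : Prop :=
  ∀ f : ℕ → Pos, f 0 = p → G.IsPlay f → (∀ n, f n ∈ U) →
    (∀ n, G.owner (f n) = i → f (n + 1) = g (f n)) → G.WinsPlaySeq i f

/-- An `i`-paradise inside the arena `U`: a trap for the opponent on which `g` is a
positional winning strategy for player `i`. -/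
structure IsParadise (U : Set Pos) (i : Fin 2) (T : Set Pos) (g : Pos → Pos) : Prop where
  subset : T ⊆ U
  trap : ∀ p ∈ T, G.owner p ≠ i → ∀ q, G.edge p q → q ∈ U → q ∈ T
  move_edge : ∀ p ∈ T, G.owner p = i → G.edge p (g p)
  move_mem : ∀ p ∈ T, G.owner p = i → g p ∈ T
  wins : ∀ p ∈ T, PWinsIn G T i g p

lemma isParadise_empty (U : Set Pos) (i : Fin 2) : IsParadise G U i ∅ id := by
  refine ⟨Set.empty_subset _, ?_, ?_, ?_, ?_⟩ <;> intro p hp <;> exact absurd hp (Set.notMem_empty p)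

lemma win_of_tail_in {T : Set Pos} {i : Fin 2} {g' : Pos → Pos}
    (hT : ∀ p ∈ T, PWinsIn G T i g' p) (N : ℕ) {f : ℕ → Pos} (hplay : G.IsPlay f)
    (hstay : ∀ k, f (N + k) ∈ T)
    (hcons : ∀ k, G.owner (f (N + k)) = i → f (N + k + 1) = g' (f (N + k))) :
    G.WinsPlaySeq i f := by
  apply winsPlaySeq_shift G N
  exact hT (f N) (hstay 0) (fun n => f (N + n)) rfl (fun n => hplay (N + n))
    (fun n => hstay n) (fun n => hcons n)

/-! ### Attractors -/

variable (a : Fin 2) (V B : Set Pos)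

/-- One step of the attractor construction for player `a` towards `B` inside `V`. -/
def attrF : Set Pos →o Set Pos where
  toFun X := B ∪ {p | p ∈ V ∧ ((G.owner p = a ∧ ∃ q, G.edge p q ∧ q ∈ V ∧ q ∈ X) ∨
      (G.owner p ≠ a ∧ ∀ q, G.edge p q → q ∈ V → q ∈ X))}
  monotone' := by
    intro X Y hXY p hp
    rcases hp with hp | ⟨hpV, hc⟩
    · exact Or.inl hp
    · refine Or.inr ⟨hpV, ?_⟩
      rcases hc with ⟨ho, q, he, hqV, hqX⟩ | ⟨ho, hall⟩
      · exact Or.inl ⟨ho, q, he, hqV, hXY hqX⟩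
      · exact Or.inr ⟨ho, fun q he hq => hXY (hall q he hq)⟩

/-- The attractor of player `a` towards `B` inside `V`. -/
def attrSet : Set Pos := (attrF G a V B).lfp

/-- Ordinal rank inside the attractor. -/
noncomputable def aRank (p : Pos) : Ordinal.{u} :=
  sInf {o | p ∈ lfpApprox (attrF G a V B) ⊥ o}

lemma attrF_fixed : attrF G a V B (attrSet G a V B) = attrSet G a V B :=
  OrderHom.map_lfp _

lemma base_subset_attr : B ⊆ attrSet G a V B := by
  rw [← attrF_fixed]; exact fun p hp => Or.inl hp

lemma attr_subset (hB : B ⊆ V) : attrSet G a V B ⊆ V := by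
  have h : attrF G a V B V ≤ V := by
    intro p hp; rcases hp with h | ⟨h, _⟩; exacts [hB h, h]
  exact OrderHom.lfp_le _ h

lemma attr_step_own {p q : Pos} (hpV : p ∈ V) (ho : G.owner p = a) (he : G.edge p q)
    (hqV : q ∈ V) (hq : q ∈ attrSet G a V B) : p ∈ attrSet G a V B := by
  rw [← attrF_fixed]; exact Or.inr ⟨hpV, Or.inl ⟨ho, q, he, hqV, hq⟩⟩

lemma attr_step_opp {p : Pos} (hpV : p ∈ V) (ho : G.owner p ≠ a)
    (hall : ∀ q, G.edge p q → q ∈ V → q ∈ attrSet G a V B) : p ∈ attrSet G a V B := by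
  rw [← attrF_fixed]; exact Or.inr ⟨hpV, Or.inr ⟨ho, hall⟩⟩

lemma approx_subset_attr (b : Ordinal.{u}) :
    lfpApprox (attrF G a V B) ⊥ b ⊆ attrSet G a V B :=
  lfpApprox_le_of_mem_fixedPoints (f := attrF G a V B) (x := ⊥) (attrF_fixed G a V B) bot_le b

private lemma mem_lfpApprox_elim {F : Set Pos →o Set Pos} {p : Pos} {o : Ordinal.{u}}
    (h : p ∈ lfpApprox F ⊥ o) : ∃ b < o, p ∈ F (lfpApprox F ⊥ b) := by
  rw [lfpApprox] at h
  simp only [bot_sup_eq, Set.iSup_eq_iUnion, Set.mem_iUnion] at h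
  obtain ⟨b, hb, hpt⟩ := h
  exact ⟨b, hb, hpt⟩

lemma mem_approx_rank {p : Pos} (hp : p ∈ attrSet G a V B) :
    p ∈ lfpApprox (attrF G a V B) ⊥ (aRank G a V B p) := by
  have hne : {o | p ∈ lfpApprox (attrF G a V B) ⊥ o}.Nonempty := by
    refine ⟨Cardinal.ord (Order.succ (Cardinal.mk (Set Pos))), ?_⟩
    rw [Set.mem_setOf_eq, lfpApprox_ord_eq_lfp]
    exact hp
  exact csInf_mem hne

lemma aRank_le {p : Pos} {b : Ordinal.{u}} (h : p ∈ lfpApprox (attrF G a V B) ⊥ b) :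
    aRank G a V B p ≤ b :=
  csInf_le (OrderBot.bddBelow _) h

lemma attr_rank_step {p : Pos} (hp : p ∈ attrSet G a V B) (hpB : p ∉ B) :
    (G.owner p = a → ∃ q, G.edge p q ∧ q ∈ V ∧ q ∈ attrSet G a V B ∧
        aRank G a V B q < aRank G a V B p) ∧
    (G.owner p ≠ a → ∀ q, G.edge p q → q ∈ V →
        q ∈ attrSet G a V B ∧ aRank G a V B q < aRank G a V B p) := by
  obtain ⟨b, hb, hmem⟩ := mem_lfpApprox_elim (mem_approx_rank G a V B hp)
  rcases hmem with h | ⟨hpV, hc⟩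
  · exact absurd h hpB
  constructor
  · intro ho
    rcases hc with ⟨_, q, he, hqV, hqX⟩ | ⟨ho', _⟩
    · exact ⟨q, he, hqV, approx_subset_attr G a V B b hqX,
        lt_of_le_of_lt (aRank_le G a V B hqX) hb⟩
    · exact absurd ho ho'
  · intro ho q he hqV
    rcases hc with ⟨ho', _⟩ | ⟨_, hall⟩
    · exact absurd ho' ho
    · have hq := hall q he hqV
      exact ⟨approx_subset_attr G a V B b hq,
        lt_of_le_of_lt (aRank_le G a V B hq) hb⟩

/-- The attractor strategy move. -/
noncomputable def attrMove (p : Pos) : Pos :=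
  if h : p ∈ attrSet G a V B ∧ p ∉ B ∧ G.owner p = a then
    ((attr_rank_step G a V B h.1 h.2.1).1 h.2.2).choose
  else p

lemma attrMove_spec {p : Pos} (hp : p ∈ attrSet G a V B) (hB : p ∉ B) (ho : G.owner p = a) :
    G.edge p (attrMove G a V B p) ∧ attrMove G a V B p ∈ V ∧
      attrMove G a V B p ∈ attrSet G a V B ∧
      aRank G a V B (attrMove G a V B p) < aRank G a V B p := by
  rw [attrMove, dif_pos (⟨hp, hB, ho⟩ : _ ∧ _ ∧ _)]
  exact ((attr_rank_step G a V B hp hB).1 ho).choose_spec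

/-- The attractor strategy forces the play into `B`. -/
lemma attr_reach {f : ℕ → Pos} (hplay : G.IsPlay f) (hstay : ∀ n, f n ∈ V)
    (hcons : ∀ n, f n ∈ attrSet G a V B → f n ∉ B → G.owner (f n) = a →
      f (n + 1) = attrMove G a V B (f n))
    (m : ℕ) (hm : f m ∈ attrSet G a V B) : ∃ k, m ≤ k ∧ f k ∈ B := by
  by_contra hcontra
  push_neg at hcontra
  have key : ∀ j, f (m + j) ∈ attrSet G a V B ∧
      aRank G a V B (f (m + j + 1)) < aRank G a V B (f (m + j)) := by
    intro j
    induction j with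
    | zero =>
      refine ⟨hm, ?_⟩
      have hB : f m ∉ B := hcontra m le_rfl
      by_cases ho : G.owner (f m) = a
      · rw [hcons m hm hB ho]
        exact (attrMove_spec G a V B hm hB ho).2.2.2
      · exact ((attr_rank_step G a V B hm hB).2 ho _ (hplay m) (hstay (m + 1))).2
    | succ j ihj =>
      have hmem : f (m + j + 1) ∈ attrSet G a V B := by
        have hB : f (m + j) ∉ B := hcontra (m + j) (Nat.le_add_right _ _)
        by_cases ho : G.owner (f (m + j)) = a
        · rw [hcons (m + j) ihj.1 hB ho]
          exact (attrMove_spec G a V B ihj.1 hB ho).2.2.1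
        · exact ((attr_rank_step G a V B ihj.1 hB).2 ho _ (hplay (m + j)) (hstay (m + j + 1))).1
      refine ⟨hmem, ?_⟩
      show aRank G a V B (f (m + j + 1 + 1)) < aRank G a V B (f (m + j + 1))
      have hB : f (m + j + 1) ∉ B := hcontra (m + j + 1) (by omega)
      by_cases ho : G.owner (f (m + j + 1)) = a
      · rw [hcons (m + j + 1) hmem hB ho]
        exact (attrMove_spec G a V B hmem hB ho).2.2.2
      · exact ((attr_rank_step G a V B hmem hB).2 ho _ (hplay (m + j + 1)) (hstay (m + j + 2))).2
  obtain ⟨o, ho, hmin⟩ := (wellFounded_lt (α := Ordinal.{u})).has_min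
    (Set.range fun j => aRank G a V B (f (m + j))) ⟨_, 0, rfl⟩
  obtain ⟨j₀, hj₀⟩ := ho
  exact hmin _ ⟨j₀ + 1, rfl⟩ (hj₀ ▸ (key j₀).2)

lemma not_attr_escape {p q : Pos} (hpV : p ∈ V) (hpA : p ∉ attrSet G a V B)
    (ho : G.owner p = a) (he : G.edge p q) (hqV : q ∈ V) : q ∉ attrSet G a V B :=
  fun hq => hpA (attr_step_own G a V B hpV ho he hqV hq)

/-- Subarena: every position has a successor inside. -/
def IsSubarena (U : Set Pos) : Prop := ∀ p ∈ U, ∃ q, G.edge p q ∧ q ∈ U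

lemma subarena_diff_attr {V' B' : Set Pos} (hV : IsSubarena G V') :
    IsSubarena G (V' \ attrSet G a V' B') := by
  rintro p ⟨hpV, hpA⟩
  by_cases ho : G.owner p = a
  · obtain ⟨q, he, hqV⟩ := hV p hpV
    exact ⟨q, he, hqV, not_attr_escape G a V' B' hpV hpA ho he hqV⟩
  · by_contra hc
    push_neg at hc
    refine hpA (attr_step_opp G a V' B' hpV ho (fun q he hqV => ?_))
    have := hc q he
    rw [Set.mem_diff] at this
    by_contra hq
    exact this ⟨hqV, hq⟩

/-! ### Union of paradises -/

lemma paradise_union (U : Set Pos) (i : Fin 2) :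
    ∃ g, IsParadise G U i (⋃₀ {T | ∃ g', IsParadise G U i T g'}) g := by
  classical
  let ι := {T : Set Pos // ∃ g', IsParadise G U i T g'}
  have wf : WellFounded (WellOrderingRel : ι → ι → Prop) := IsWellFounded.wf
  let st : ι → Pos → Pos := fun T => T.2.choose
  have hst : ∀ T : ι, IsParadise G U i T.1 (st T) := fun T => T.2.choose_spec
  set W := ⋃₀ {T | ∃ g', IsParadise G U i T g'} with hWdef
  have hmemW : ∀ {p : Pos}, p ∈ W → {T : ι | p ∈ T.1}.Nonempty := by
    intro p hp
    obtain ⟨T, hT, hpT⟩ := hp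
    exact ⟨⟨T, hT⟩, hpT⟩
  let idx : ∀ p, p ∈ W → ι := fun p hp => wf.min {T : ι | p ∈ T.1} (hmemW hp)
  have idx_mem : ∀ p hp, p ∈ (idx p hp).1 := fun p hp => wf.min_mem _ (hmemW hp)
  have idx_min : ∀ p hp (T : ι), p ∈ T.1 → ¬ WellOrderingRel T (idx p hp) :=
    fun p hp T hT => wf.not_lt_min _ hT
  have hWU : W ⊆ U := by
    rintro p ⟨T, ⟨g', hT⟩, hpT⟩
    exact hT.subset hpT
  set g : Pos → Pos := fun p => if hp : p ∈ W then st (idx p hp) p else p with hg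
  have hgeq : ∀ p (hp : p ∈ W), g p = st (idx p hp) p := by
    intro p hp
    rw [hg]
    exact dif_pos hp
  refine ⟨g, hWU, ?_, ?_, ?_, ?_⟩
  · -- trap
    intro p hp ho q he hqU
    refine ⟨(idx p hp).1, (idx p hp).2, ?_⟩
    exact (hst (idx p hp)).trap p (idx_mem p hp) ho q he hqU
  · -- move_edge
    intro p hp ho
    rw [hgeq p hp]
    exact (hst (idx p hp)).move_edge p (idx_mem p hp) ho
  · -- move_mem
    intro p hp ho
    rw [hgeq p hp]
    exact ⟨(idx p hp).1, (idx p hp).2, (hst (idx p hp)).move_mem p (idx_mem p hp) ho⟩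
  · -- wins
    intro p hp f hf0 hplay hstay hcons
    set m : ℕ → ι := fun n => idx (f n) (hstay n) with hm
    have step : ∀ n, f (n + 1) ∈ (m n).1 := by
      intro n
      by_cases ho : G.owner (f n) = i
      · rw [hcons n ho, hgeq (f n) (hstay n)]
        exact (hst (m n)).move_mem (f n) (idx_mem (f n) (hstay n)) ho
      · exact (hst (m n)).trap (f n) (idx_mem (f n) (hstay n)) ho _ (hplay n) (hWU (hstay (n + 1)))
    have mono : ∀ n, m (n + 1) = m n ∨ WellOrderingRel (m (n + 1)) (m n) := by
      intro n
      rcases trichotomous_of WellOrderingRel (m (n + 1)) (m n) with h | h | h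
      · exact Or.inr h
      · exact Or.inl h
      · exact absurd h (idx_min (f (n + 1)) (hstay (n + 1)) (m n) (step n))
    obtain ⟨Tstar, hTr, hTmin⟩ := wf.has_min (Set.range m) ⟨m 0, 0, rfl⟩
    obtain ⟨n₀, hn₀⟩ := hTr
    have const : ∀ k, m (n₀ + k) = Tstar := by
      intro k
      induction k with
      | zero => exact hn₀
      | succ k ihk =>
        rcases mono (n₀ + k) with h | h
        · exact h.trans ihk
        · rw [ihk] at h
          exact absurd h (hTmin (m (n₀ + k + 1)) ⟨n₀ + k + 1, rfl⟩)
    have hstay' : ∀ k, f (n₀ + k) ∈ Tstar.1 := by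
      intro k
      have := idx_mem (f (n₀ + k)) (hstay (n₀ + k))
      rwa [show idx (f (n₀ + k)) (hstay (n₀ + k)) = Tstar from const k] at this
    apply win_of_tail_in G (hst Tstar).wins n₀ hplay hstay'
    intro k ho
    rw [hcons (n₀ + k) ho, hgeq (f (n₀ + k)) (hstay (n₀ + k))]
    rw [show idx (f (n₀ + k)) (hstay (n₀ + k)) = Tstar from const k]

/-! ### Zielonka's construction -/

/-- The desired outcome for a subarena: a partition into two paradises. -/
def ZOutcome (U : Set Pos) : Prop :=
  ∀ i : Fin 2, ∃ Ti gi Tj gj, IsParadise G U i Ti gi ∧ IsParadise G U (1 - i) Tj gj ∧ Ti ∪ Tj = U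

lemma zOutcome_empty : ZOutcome G ∅ := by
  intro i
  exact ⟨∅, id, ∅, id, isParadise_empty G ∅ i, isParadise_empty G ∅ (1 - i), by simp⟩

lemma zielonka (hfin : (Set.range G.priority).Finite) :
    ∀ n (U : Set Pos), IsSubarena G U → (G.priority '' U).ncard ≤ n → ZOutcome G U := by
  intro n
  induction n with
  | zero =>
    intro U _ hcard
    have hfinU : (G.priority '' U).Finite := hfin.subset (Set.image_subset_range _ _)
    have himg : G.priority '' U = ∅ := (Set.ncard_eq_zero hfinU).1 (Nat.le_zero.1 hcard)
    have hUe : U = ∅ := Set.image_eq_empty.1 himg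
    rw [hUe]
    exact zOutcome_empty G
  | succ n ih =>
    intro U hU hcard
    by_cases hUe : U = ∅
    · rw [hUe]; exact zOutcome_empty G
    have hUne : U.Nonempty := Set.nonempty_iff_ne_empty.2 hUe
    have hfinU : (G.priority '' U).Finite := hfin.subset (Set.image_subset_range _ _)
    set d := sSup (G.priority '' U) with hd
    have hdmem : d ∈ G.priority '' U := Nat.sSup_mem (hUne.image _) hfinU.bddAbove
    have hdmax : ∀ p ∈ U, G.priority p ≤ d := fun p hp => le_csSup hfinU.bddAbove ⟨p, hp, rfl⟩
    set i₀ : Fin 2 := ⟨d % 2, Nat.mod_lt _ (by norm_num)⟩ with hi₀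
    set j₀ : Fin 2 := 1 - i₀ with hj₀
    have hval : i₀.val = d % 2 := rfl
    have hij : 1 - j₀ = i₀ := by rw [hj₀]; exact fin2_sub_sub i₀
    obtain ⟨gW, hW⟩ := paradise_union G U j₀
    set W := ⋃₀ {T | ∃ g', IsParadise G U j₀ T g'} with hWdef
    have hWU : W ⊆ U := hW.subset
    set AW := attrSet G j₀ U W with hAWdef
    have hWAW : W ⊆ AW := base_subset_attr G j₀ U W
    have hAWU : AW ⊆ U := attr_subset G j₀ U W hWU
    set Z := U \ AW with hZdef
    have hZU : Z ⊆ U := Set.diff_subset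
    have hZsub : IsSubarena G Z := subarena_diff_attr G j₀ hU
    set D := {p | p ∈ Z ∧ G.priority p = d} with hDdef
    have hDZ : D ⊆ Z := fun p hp => hp.1
    set A := attrSet G i₀ Z D with hAdef
    have hAZ : A ⊆ Z := attr_subset G i₀ Z D hDZ
    have hDA : D ⊆ A := base_subset_attr G i₀ Z D
    set Z' := Z \ A with hZ'def
    have hZ'Z : Z' ⊆ Z := Set.diff_subset
    have hZ'sub : IsSubarena G Z' := subarena_diff_attr G i₀ hZsub
    -- apply the induction hypothesis to Z'
    have hcard' : (G.priority '' Z').ncard ≤ n := by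
      have hsub : G.priority '' Z' ⊆ (G.priority '' U) \ {d} := by
        rintro k ⟨p, hp, rfl⟩
        refine ⟨⟨p, hZU (hZ'Z hp), rfl⟩, ?_⟩
        intro hk
        rw [Set.mem_singleton_iff] at hk
        exact hp.2 (hDA ⟨hZ'Z hp, hk⟩)
      have h1 : (G.priority '' Z').ncard ≤ ((G.priority '' U) \ {d}).ncard :=
        Set.ncard_le_ncard hsub hfinU.diff
      have h2 : ((G.priority '' U) \ {d}).ncard = (G.priority '' U).ncard - 1 :=
        Set.ncard_diff_singleton_of_mem hdmem
      have h3 : 0 < (G.priority '' U).ncard := (Set.ncard_pos hfinU).2 (hUne.image _)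
      omega
    obtain ⟨Ti', gi', Tj', gj', hPi, hPj, hcov'⟩ := ih Z' hZ'sub hcard' i₀
    rw [← hj₀] at hPj
    have hTj'Z' : Tj' ⊆ Z' := hPj.subset
    have hTi'Z' : Ti' ⊆ Z' := hPi.subset
    classical
    -- combined strategy for player j₀ on Tj' ∪ AW
    set gP : Pos → Pos := fun p =>
      if p ∈ W then gW p
      else if p ∈ AW then attrMove G j₀ U W p
      else if p ∈ Tj' then gj' p else p with hgP
    have hgPW : ∀ p ∈ W, gP p = gW p := fun p hp => if_pos hp
    have hgPA : ∀ p, p ∉ W → p ∈ AW → gP p = attrMove G j₀ U W p := by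
      intro p h1 h2
      rw [hgP]
      simp only
      rw [if_neg h1, if_pos h2]
    have hgPT : ∀ p, p ∉ AW → p ∈ Tj' → gP p = gj' p := by
      intro p h1 h2
      rw [hgP]
      simp only
      rw [if_neg (fun h => h1 (hWAW h)), if_neg h1, if_pos h2]
    have hPsubU : Tj' ∪ AW ⊆ U := Set.union_subset (fun p hp => hZU (hZ'Z (hTj'Z' hp))) hAWU
    have htrapTj' : ∀ p ∈ Tj', G.owner p ≠ j₀ → ∀ q, G.edge p q → q ∈ U → q ∈ Tj' ∪ AW := by
      intro p hp ho q he hqU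
      by_cases hqAW : q ∈ AW
      · exact Or.inr hqAW
      have hoi : G.owner p = i₀ := by
        have h := fin2_other ho
        rwa [hij] at h
      have hqZ : q ∈ Z := ⟨hqU, hqAW⟩
      have hqA : q ∉ A :=
        not_attr_escape G i₀ Z D (hZ'Z (hTj'Z' hp)) (hTj'Z' hp).2 hoi he hqZ
      exact Or.inl (hPj.trap p hp ho q he ⟨hqZ, hqA⟩)
    have hPpar : IsParadise G U j₀ (Tj' ∪ AW) gP := by
      refine ⟨hPsubU, ?_, ?_, ?_, ?_⟩
      · -- trap
        intro p hp ho q he hqU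
        rcases hp with hp | hp
        · exact htrapTj' p hp ho q he hqU
        · by_cases hpW : p ∈ W
          · exact Or.inr (hWAW (hW.trap p hpW ho q he hqU))
          · exact Or.inr ((attr_rank_step G j₀ U W hp hpW).2 ho q he hqU).1
      · -- move_edge
        intro p hp ho
        by_cases hpW : p ∈ W
        · rw [hgPW p hpW]; exact hW.move_edge p hpW ho
        · by_cases hpAW : p ∈ AW
          · rw [hgPA p hpW hpAW]
            exact (attrMove_spec G j₀ U W hpAW hpW ho).1
          · have hpT : p ∈ Tj' := (hp.resolve_right hpAW)
            rw [hgPT p hpAW hpT]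
            exact hPj.move_edge p hpT ho
      · -- move_mem
        intro p hp ho
        by_cases hpW : p ∈ W
        · rw [hgPW p hpW]; exact Or.inr (hWAW (hW.move_mem p hpW ho))
        · by_cases hpAW : p ∈ AW
          · rw [hgPA p hpW hpAW]
            exact Or.inr (attrMove_spec G j₀ U W hpAW hpW ho).2.2.1
          · have hpT : p ∈ Tj' := (hp.resolve_right hpAW)
            rw [hgPT p hpAW hpT]
            exact Or.inl (hPj.move_mem p hpT ho)
      · -- wins
        intro p hp f hf0 hplay hstay hcons
        have hstayU : ∀ k, f k ∈ U := fun k => hPsubU (hstay k)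
        by_cases hA' : ∃ nn, f nn ∈ AW
        · obtain ⟨n₁, hn₁⟩ := hA'
          obtain ⟨k, _, hfk⟩ := attr_reach G j₀ U W hplay hstayU
            (fun mm hm1 hm2 ho => by rw [hcons mm ho, hgPA (f mm) hm2 hm1]) n₁ hn₁
          have hWstay : ∀ t, f (k + t) ∈ W := by
            intro t
            induction t with
            | zero => exact hfk
            | succ t iht =>
              by_cases ho : G.owner (f (k + t)) = j₀
              · have := hcons (k + t) ho
                show f (k + t + 1) ∈ W
                rw [this, hgPW _ iht]
                exact hW.move_mem _ iht ho
              · exact hW.trap _ iht ho _ (hplay (k + t)) (hstayU (k + t + 1))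
          apply win_of_tail_in G hW.wins k hplay hWstay
          intro t ho
          rw [hcons (k + t) ho, hgPW _ (hWstay t)]
        · push_neg at hA'
          have hTstay : ∀ k, f k ∈ Tj' := by
            intro k
            induction k with
            | zero =>
              have : p ∉ AW := hf0 ▸ hA' 0
              exact hf0 ▸ (hp.resolve_right this)
            | succ k ihk =>
              by_cases ho : G.owner (f k) = j₀
              · show f (k + 1) ∈ Tj'
                rw [hcons k ho, hgPT _ (hA' k) ihk]
                exact hPj.move_mem _ ihk ho
              · exact (htrapTj' (f k) ihk ho _ (hplay k) (hstayU (k + 1))).resolve_right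
                  (hA' (k + 1))
          refine hPj.wins p (hf0 ▸ hTstay 0) f hf0 hplay hTstay ?_
          intro k ho
          rw [hcons k ho, hgPT _ (hA' k) (hTstay k)]
    -- every j₀-paradise is contained in W
    have hPW : Tj' ∪ AW ⊆ W := by
      rw [hWdef]
      exact Set.subset_sUnion_of_mem ⟨gP, hPpar⟩
    have hTj'empty : Tj' = ∅ := by
      rw [Set.eq_empty_iff_forall_notMem]
      intro p hp
      exact (hZ'Z (hTj'Z' hp)).2 (hWAW (hPW (Or.inl hp)))
    have hTi' : Ti' = Z' := by rw [← hcov', hTj'empty, Set.union_empty]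
    rw [hTi'] at hPi
    -- strategy for player i₀ on Z
    set gZ : Pos → Pos := fun p =>
      if p ∈ Z' then gi' p
      else if p ∈ A ∧ p ∉ D then attrMove G i₀ Z D p
      else if h : p ∈ Z ∧ G.owner p = i₀ then (hZsub p h.1).choose else p with hgZ
    have hgZ1 : ∀ p ∈ Z', gZ p = gi' p := fun p hp => if_pos hp
    have hgZ2 : ∀ p, p ∈ A → p ∉ D → gZ p = attrMove G i₀ Z D p := by
      intro p h1 h2
      rw [hgZ]
      simp only
      rw [if_neg (fun h => h.2 h1), if_pos ⟨h1, h2⟩]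
    have hgZ3 : ∀ p (h1 : p ∈ D), G.owner p = i₀ → gZ p = (hZsub p (hDZ h1)).choose := by
      intro p h1 ho
      rw [hgZ]
      simp only
      rw [if_neg (fun h => h.2 (hDA h1)), if_neg (fun h => h.2 h1),
        dif_pos ⟨hDZ h1, ho⟩]
    have hZpar : IsParadise G U i₀ Z gZ := by
      refine ⟨hZU, ?_, ?_, ?_, ?_⟩
      · -- trap
        intro p hp ho q he hqU
        have hoj : G.owner p = j₀ := by rw [hj₀]; exact fin2_other ho
        exact ⟨hqU, not_attr_escape G j₀ U W hp.1 hp.2 hoj he hqU⟩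
      · -- move_edge
        intro p hp ho
        by_cases h1 : p ∈ Z'
        · rw [hgZ1 p h1]; exact hPi.move_edge p h1 ho
        · have hpA : p ∈ A := by
            by_contra hc
            exact h1 ⟨hp, hc⟩
          by_cases h2 : p ∈ D
          · rw [hgZ3 p h2 ho]; exact (hZsub p (hDZ h2)).choose_spec.1
          · rw [hgZ2 p hpA h2]; exact (attrMove_spec G i₀ Z D hpA h2 ho).1
      · -- move_mem
        intro p hp ho
        by_cases h1 : p ∈ Z'
        · rw [hgZ1 p h1]; exact hZ'Z (hPi.move_mem p h1 ho)
        · have hpA : p ∈ A := by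
            by_contra hc
            exact h1 ⟨hp, hc⟩
          by_cases h2 : p ∈ D
          · rw [hgZ3 p h2 ho]; exact (hZsub p (hDZ h2)).choose_spec.2
          · rw [hgZ2 p hpA h2]; exact hAZ (attrMove_spec G i₀ Z D hpA h2 ho).2.2.1
      · -- wins
        intro p hp f hf0 hplay hstay hcons
        by_cases hDf : {nn | f nn ∈ D}.Infinite
        · refine winsPlaySeq_of_maxpri G hval.symm (Set.Infinite.mono ?_ hDf) ?_
          · exact fun nn hnn => hnn.2
          · exact fun nn => hdmax _ (hZU (hstay nn))
        · rw [Set.not_infinite] at hDf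
          obtain ⟨N, hN⟩ : ∃ N, ∀ nn, N ≤ nn → f nn ∉ D := by
            rcases hDf.bddAbove with ⟨N, hNb⟩
            refine ⟨N + 1, fun nn hnn hmem => ?_⟩
            have := hNb hmem
            omega
          have hnotA : ∀ nn, N ≤ nn → f nn ∉ A := by
            intro nn hnn hA'
            obtain ⟨k, hk, hfk⟩ := attr_reach G i₀ Z D hplay hstay
              (fun mm hm1 hm2 ho => by
                rw [hcons mm ho, hgZ2 (f mm) hm1 hm2]) nn hA'
            exact hN k (le_trans hnn hk) hfk
          have hZ'stay : ∀ k, f (N + k) ∈ Z' :=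
            fun k => ⟨hstay (N + k), hnotA (N + k) (Nat.le_add_right _ _)⟩
          apply win_of_tail_in G hPi.wins N hplay hZ'stay
          intro k ho
          rw [hcons (N + k) ho, hgZ1 _ (hZ'stay k)]
    -- assemble
    have hcovU : Z ∪ AW = U := by
      rw [hZdef]
      exact Set.diff_union_of_subset hAWU
    rw [hTj'empty, Set.empty_union] at hPpar
    intro i
    rcases fin2_cases i₀ i with rfl | hii
    · refine ⟨Z, gZ, AW, gP, hZpar, ?_, hcovU⟩
      rw [← hj₀]
      exact hPpar
    · rw [← hj₀] at hii
      rw [hii]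
      refine ⟨AW, gP, Z, gZ, hPpar, ?_, by rw [Set.union_comm]; exact hcovU⟩
      rw [hij]
      exact hZpar

/-! ### From paradises to actual strategies -/

lemma paradise_strategy {i : Fin 2} {T : Set Pos} {g : Pos → Pos}
    (hP : IsParadise G Set.univ i T g) :
    ∃ σ : G.Strategy i, σ.Positional ∧ ∀ p ∈ T, σ.WinsFrom p := by
  classical
  set m : Pos → Pos := fun p => if G.owner p = i ∧ p ∈ T then g p else (G.total p).choose
    with hmdef
  have hm1 : ∀ p, G.owner p = i → p ∈ T → m p = g p := fun p h1 h2 => if_pos ⟨h1, h2⟩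
  have hm : ∀ p, G.owner p = i → G.edge p (m p) := by
    intro p hp
    by_cases h : G.owner p = i ∧ p ∈ T
    · rw [hmdef]
      simp only
      rw [if_pos h]
      exact hP.move_edge p h.2 h.1
    · rw [hmdef]
      simp only
      rw [if_neg h]
      exact (G.total p).choose_spec
  refine ⟨⟨fun _ p => m p, fun _ p hp => hm p hp⟩, fun _ _ _ => rfl, ?_⟩
  intro p hpT τ
  show G.WinsPlaySeq i (play (Strategy.combine _ τ) p)
  set F := Strategy.combine (⟨fun _ p => m p, fun _ p hp => hm p hp⟩ : G.Strategy i) τ with hF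
  set f : ℕ → Pos := play F p with hfdef
  have hf0 : f 0 = p := rfl
  have hfs : ∀ n, f (n + 1) = F (playHist F p n).2 (f n) := fun n => rfl
  have hplay : G.IsPlay f := by
    intro n
    rw [hfs n]
    show G.edge (f n) (if G.owner (f n) = i then m (f n) else τ.move _ (f n))
    by_cases ho : G.owner (f n) = i
    · rw [if_pos ho]; exact hm _ ho
    · rw [if_neg ho]; exact τ.valid _ _ (fin2_other ho)
  have hcons : ∀ n, G.owner (f n) = i → f (n + 1) = m (f n) := by
    intro n ho
    rw [hfs n]
    show (if G.owner (f n) = i then m (f n) else τ.move _ (f n)) = m (f n)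
    rw [if_pos ho]
  have hstay : ∀ n, f n ∈ T := by
    intro n
    induction n with
    | zero => exact hf0 ▸ hpT
    | succ k ih =>
      by_cases ho : G.owner (f k) = i
      · show f (k + 1) ∈ T
        rw [hcons k ho, hm1 _ ho ih]
        exact hP.move_mem _ ih ho
      · exact hP.trap _ ih ho _ (hplay k) trivial
  have hcons' : ∀ n, G.owner (f n) = i → f (n + 1) = g (f n) :=
    fun n ho => (hcons n ho).trans (hm1 _ ho (hstay n))
  exact hP.wins p hpT f hf0 hplay hstay hcons'

end PositionalDeterminacy



/-- positional determinacy of parity games: the winning sets `W₀`, `W₁`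
partition the positions, and each player wins positionally from its winning set. -/
theorem parity_positional_determinacy {Pos : Type*} (G : ParityGame Pos)
    (hfin : (Set.range G.priority).Finite) :
    (∀ p : Pos, (G.WinsFrom 0 p ∧ ¬ G.WinsFrom 1 p) ∨ (G.WinsFrom 1 p ∧ ¬ G.WinsFrom 0 p)) ∧
    (∀ i : Fin 2, ∃ σ : G.Strategy i, σ.Positional ∧ ∀ p, G.WinsFrom i p → σ.WinsFrom p) := by
  classical
  have hsub : IsSubarena G Set.univ := by
    intro p _
    obtain ⟨q, hq⟩ := G.total p
    exact ⟨q, hq, trivial⟩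
  have hout := zielonka G hfin ((G.priority '' Set.univ).ncard) Set.univ hsub le_rfl
  obtain ⟨T₀, g₀, T₁, g₁, hP₀, hP₁', hcov⟩ := hout 0
  have e10 : (1 - 0 : Fin 2) = 1 := by decide
  rw [e10] at hP₁'
  obtain ⟨σ₀, hσ₀pos, hσ₀win⟩ := paradise_strategy G hP₀
  obtain ⟨σ₁, hσ₁pos, hσ₁win⟩ := paradise_strategy G hP₁'
  have hmemUT : ∀ p : Pos, p ∈ T₀ ∪ T₁ := by
    intro p
    rw [hcov]
    trivial
  have hw0 : ∀ p ∈ T₀, G.WinsFrom 0 p := fun p hp => ⟨σ₀, hσ₀win p hp⟩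
  have hw1 : ∀ p ∈ T₁, G.WinsFrom 1 p := fun p hp => ⟨σ₁, hσ₁win p hp⟩
  constructor
  · intro p
    rcases hmemUT p with hp | hp
    · exact Or.inl ⟨hw0 p hp, fun h1 => not_winsFrom_both G (hw0 p hp) h1⟩
    · exact Or.inr ⟨hw1 p hp, fun h0 => not_winsFrom_both G h0 (hw1 p hp)⟩
  · intro i
    rcases fin2_cases 0 i with rfl | hi
    · refine ⟨σ₀, hσ₀pos, ?_⟩
      intro p hp
      rcases hmemUT p with h | h
      · exact hσ₀win p h
      · exact (not_winsFrom_both G hp (hw1 p h)).elim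
    · rw [e10] at hi
      rw [hi]
      refine ⟨σ₁, hσ₁pos, ?_⟩
      intro p hp
      rcases hmemUT p with h | h
      · exact (not_winsFrom_both G (hw0 p h) hp).elim
      · exact hσ₁win p h


end MuCalc
end

section
/- Let G be a finite parity game, i ∈ {0,1} a player, σᵢ a positional strategy for player i, and p a position. Consider the subgraph G_σ obtained from the game graph by removing, from every position p′ ∈ Posᵢ, all outgoing edges except the one chosen by σᵢ. Then σᵢ is a winning strategy for player i from p if and only if there is no cycle in G_σ reachable from p whose largest priority has parity 1−i. -/
set_option maxHeartbeats 1000000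

namespace MuCalc

attribute [local instance] Classical.propDecidable

variable {S Var Prp Act : Type*}

section PWAux

open ParityGame

lemma fin2_resolve {a i : Fin 2} (h : ¬ a = i) : a = 1 - i := by
  fin_cases a <;> fin_cases i <;> simp_all

lemma fin2_val_ne (i : Fin 2) : ((1 - i : Fin 2) : ℕ) ≠ (i : ℕ) := by
  fin_cases i <;> decide

lemma foldr_max_le {l : List ℕ} {b k : ℕ} (hb : b ≤ k) (hl : ∀ a ∈ l, a ≤ k) :
    l.foldr max b ≤ k := by
  induction l with
  | nil => exact hb
  | cons x t ih =>
    exact max_le (hl x (List.mem_cons_self)) (ih fun a ha => hl a (List.mem_cons_of_mem _ ha))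

lemma le_foldr_max_base (l : List ℕ) (b : ℕ) : b ≤ l.foldr max b := by
  induction l with
  | nil => exact le_rfl
  | cons x t ih => exact ih.trans (le_max_right _ _)

lemma le_foldr_max_mem {l : List ℕ} {a : ℕ} (h : a ∈ l) (b : ℕ) : a ≤ l.foldr max b := by
  induction l with
  | nil => simp at h
  | cons x t ih =>
    rcases List.mem_cons.mp h with rfl | h
    · exact le_max_left _ _
    · exact (ih h).trans (le_max_right _ _)

lemma foldr_max_mem (l : List ℕ) (b : ℕ) : l.foldr max b = b ∨ l.foldr max b ∈ l := by
  induction l with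
  | nil => exact Or.inl rfl
  | cons x t ih =>
    rcases max_choice x (t.foldr max b) with h | h
    · right; rw [List.foldr_cons, h]; exact List.mem_cons_self
    · rw [List.foldr_cons, h]
      rcases ih with h' | h'
      · exact Or.inl h'
      · exact Or.inr (List.mem_cons_of_mem _ h')

lemma exists_ge_of_infinite {s : Set ℕ} (hs : s.Infinite) (m : ℕ) : ∃ n ∈ s, m ≤ n := by
  by_contra h
  push_neg at h
  exact hs ((Set.finite_Iio m).subset fun n hn => h n hn)

lemma reflTransGen_exists_seq {α : Type*} {R : α → α → Prop} {p q : α}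
    (h : Relation.ReflTransGen R p q) :
    ∃ (m : ℕ) (g : ℕ → α), g 0 = p ∧ g m = q ∧ ∀ n < m, R (g n) (g (n + 1)) := by
  induction h with
  | refl => exact ⟨0, fun _ => p, rfl, rfl, by omega⟩
  | @tail b c _ hbc ih =>
    obtain ⟨m, g, h0, hm, hR⟩ := ih
    refine ⟨m + 1, fun n => if n ≤ m then g n else c, by simp [h0], by simp, ?_⟩
    intro n hn
    rcases lt_or_eq_of_le (Nat.lt_succ_iff.mp hn) with h' | h'
    · simp only [if_pos (le_of_lt h'), if_pos (Nat.succ_le_of_lt h')]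
      exact hR n h'
    · subst h'
      simp only [if_pos le_rfl, if_neg (by omega : ¬ n + 1 ≤ n)]
      rw [hm]; exact hbc

lemma path_reach {α : Type*} {R : α → α → Prop} {f : ℕ → α}
    (hf : ∀ n, R (f n) (f (n + 1))) (n : ℕ) :
    Relation.ReflTransGen R (f 0) (f n) := by
  induction n with
  | zero => exact .refl
  | succ n ih => exact ih.tail (hf n)

lemma chainSeg {α : Type*} {R : α → α → Prop} {f : ℕ → α}
    (hf : ∀ n, R (f n) (f (n + 1))) (k : ℕ) :
    ∀ a : ℕ, List.Chain R (f a)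
      (((List.range k).map (fun j => f (a + j + 1))) ++ [f (a + k + 1)]) := by
  induction k with
  | zero => intro a; simpa using List.Chain.cons (hf a) List.Chain.nil
  | succ k ih =>
    intro a
    have hlist : (List.range (k + 1)).map (fun j => f (a + j + 1)) =
        f (a + 1) :: (List.range k).map (fun j => f ((a + 1) + j + 1)) := by
      rw [List.range_succ_eq_map, List.map_cons, List.map_map]
      congr 1
      apply List.map_congr_left
      intro j _
      show f (a + (j + 1) + 1) = f ((a + 1) + j + 1)
      congr 1
      omega
    rw [hlist]
    have hend : a + (k + 1) + 1 = (a + 1) + k + 1 := by omega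
    rw [hend]
    exact List.Chain.cons (hf a) (ih (a + 1))

lemma cycle_step {α : Type*} {R : α → α → Prop} {q : α} {l : List α}
    (hchain : List.Chain R q (l ++ [q])) :
    ∀ n : ℕ, R ((q :: l).getD (n % (l.length + 1)) q)
      ((q :: l).getD ((n + 1) % (l.length + 1)) q) := by
  set L := l.length + 1 with hLdef
  set cyc := q :: l with hcyc
  set M := q :: (l ++ [q]) with hMdef
  have hch' : List.Chain' R M := hchain
  have hMlen : M.length = L + 1 := by simp [hMdef, hLdef]
  have hM : ∀ j, j < L → ∀ (h1 : j < M.length) (h2 : j + 1 < M.length),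
      R (M.get ⟨j, h1⟩) (M.get ⟨j + 1, h2⟩) := by
    intro j hj h1 h2
    exact List.isChain_iff_getElem.mp hch' j (by omega)
  have hMeq : M = cyc ++ [q] := by simp [hMdef, hcyc]
  have hclen : cyc.length = L := by simp [hcyc, hLdef]
  have hMc1 : ∀ j, j < L → cyc.getD j q = M.getD j q := by
    intro j hj
    rw [hMeq, List.getD_append _ _ _ _ (by omega)]
  have hMc2 : cyc.getD 0 q = M.getD L q := by
    have h2 : M.getD L q = (l ++ [q]).getD l.length q := by
      rw [hMdef, hLdef, List.getD_cons_succ]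
    rw [h2, List.getD_append_right _ _ _ _ le_rfl, Nat.sub_self]
    rfl
  intro n
  have hL0 : 0 < L := by omega
  have hj : n % L < L := Nat.mod_lt _ hL0
  have h1 : (n + 1) % L = ((n % L) + 1) % L :=
    ((Nat.mod_modEq n L).add_right 1).symm
  rw [h1]
  rcases lt_or_eq_of_le (Nat.succ_le_of_lt hj) with hlt | heq
  · rw [Nat.mod_eq_of_lt hlt, hMc1 _ hj, hMc1 _ hlt,
      List.getD_eq_getElem _ _ (by omega), List.getD_eq_getElem _ _ (by omega)]
    exact hM _ hj _ _
  · have heq' : n % L + 1 = L := by omega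
    have hMc2' : cyc.getD 0 q = M.getD (n % L + 1) q := by rw [heq']; exact hMc2
    rw [heq', Nat.mod_self, hMc1 _ hj, hMc2',
      List.getD_eq_getElem _ _ (by omega), List.getD_eq_getElem _ _ (by omega)]
    exact hM _ hj _ _

variable {Pos : Type*} {G : ParityGame Pos} {i : Fin 2} {σ : G.Strategy i}

lemma play_isE (hσ : σ.Positional) (τ : G.Strategy (1 - i)) (p : Pos) (n : ℕ) :
    G.edge (ParityGame.play (σ.combine τ) p n) (ParityGame.play (σ.combine τ) p (n + 1)) ∧
    (G.owner (ParityGame.play (σ.combine τ) p n) = i →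
      ParityGame.play (σ.combine τ) p (n + 1) =
        σ.move [] (ParityGame.play (σ.combine τ) p n)) := by
  set x := (ParityGame.playHist (σ.combine τ) p n).1 with hx
  set h := (ParityGame.playHist (σ.combine τ) p n).2 with hh
  have hp1 : ParityGame.play (σ.combine τ) p (n + 1) = (σ.combine τ) h x := rfl
  have hp0 : ParityGame.play (σ.combine τ) p n = x := rfl
  rw [hp0, hp1]
  unfold ParityGame.Strategy.combine
  by_cases ho : G.owner x = i
  · rw [if_pos ho]
    exact ⟨σ.valid h x ho, fun _ => hσ h [] x⟩
  · rw [if_neg ho]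
    exact ⟨τ.valid h x (fin2_resolve ho), fun hi => absurd hi ho⟩

lemma mkCounter (hσ : σ.Positional) {g : ℕ → Pos} {p : Pos} (hg0 : g 0 = p)
    (hgE : ∀ n, G.edge (g n) (g (n + 1)) ∧
      (G.owner (g n) = i → g (n + 1) = σ.move [] (g n))) :
    ∃ τ : G.Strategy (1 - i), ∀ n, ParityGame.play (σ.combine τ) p n = g n := by
  classical
  refine ⟨⟨fun h x => if G.edge x (g (h.length + 1)) ∧ g h.length = x
      then g (h.length + 1) else (G.total x).choose, ?_⟩, ?_⟩
  · intro h x _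
    split
    next hcond => exact hcond.1
    next => exact (G.total x).choose_spec
  · have key : ∀ n, ParityGame.playHist
        (σ.combine ⟨fun h x => if G.edge x (g (h.length + 1)) ∧ g h.length = x
          then g (h.length + 1) else (G.total x).choose, by
            intro h x _
            split
            next hcond => exact hcond.1
            next => exact (G.total x).choose_spec⟩) p n = (g n, (List.range n).map g) := by
      intro n
      induction n with
      | zero => simp [ParityGame.playHist, hg0]
      | succ n ih =>
        rw [show ∀ f : List Pos → Pos → Pos, ∀ m, ParityGame.playHist f p (m + 1) =
            (f (ParityGame.playHist f p m).2 (ParityGame.playHist f p m).1,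
              (ParityGame.playHist f p m).2 ++ [(ParityGame.playHist f p m).1])
          from fun _ _ => rfl]
        rw [ih]
        have hlist : (List.range n).map g ++ [g n] = (List.range (n + 1)).map g := by
          rw [List.range_succ, List.map_append, List.map_singleton]
        have hmove : ParityGame.Strategy.combine σ
            ⟨fun h x => if G.edge x (g (h.length + 1)) ∧ g h.length = x
              then g (h.length + 1) else (G.total x).choose, by
                intro h x _
                split
                next hcond => exact hcond.1
                next => exact (G.total x).choose_spec⟩ ((List.range n).map g) (g n)
            = g (n + 1) := by
          unfold ParityGame.Strategy.combine
          by_cases ho : G.owner (g n) = i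
          · rw [if_pos ho, hσ ((List.range n).map g) [] (g n)]
            exact ((hgE n).2 ho).symm
          · rw [if_neg ho]
            show (if G.edge (g n) (g (((List.range n).map g).length + 1)) ∧
                g (((List.range n).map g).length) = g n
              then g (((List.range n).map g).length + 1)
              else (G.total (g n)).choose) = g (n + 1)
            simp only [List.length_map, List.length_range]
            rw [if_pos ⟨(hgE n).1, trivial⟩]
        rw [hmove, hlist]
    intro n
    show (ParityGame.playHist _ p n).1 = g n
    rw [key n]


end PWAux

/-- in a finite parity game, a positional strategy `σ` for player `i`
wins from `p` iff in the subgraph where player `i` moves only according to `σ`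
there is no cycle reachable from `p` whose largest priority has parity `1 - i`. -/
theorem positional_winning_iff_no_bad_cycle {Pos : Type*} [Finite Pos]
    (G : ParityGame Pos) (i : Fin 2) (σ : G.Strategy i) (hσ : σ.Positional) (p : Pos) :
    σ.WinsFrom p ↔
      ¬ ∃ (q : Pos) (l : List Pos),
        Relation.ReflTransGen (fun x y => G.edge x y ∧ (G.owner x = i → y = σ.move [] x)) p q ∧
        List.Chain (fun x y => G.edge x y ∧ (G.owner x = i → y = σ.move [] x)) q (l ++ [q]) ∧
        ((l.map G.priority).foldr max (G.priority q)) % 2 = ((1 - i : Fin 2) : ℕ) := by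
  classical
  constructor
  · -- winning implies no bad cycle
    intro hwin
    rintro ⟨q, l, hreach, hchain, hpar⟩
    obtain ⟨m, g0, hg00, hg0m, hg0E⟩ := reflTransGen_exists_seq hreach
    set g : ℕ → Pos := fun n => if n < m then g0 n
      else (q :: l).getD ((n - m) % (l.length + 1)) q with hgdef
    have hglt : ∀ n, n < m → g n = g0 n := by
      intro n hn; simp only [hgdef]; rw [if_pos hn]
    have hgge : ∀ n, m ≤ n → g n = (q :: l).getD ((n - m) % (l.length + 1)) q := by
      intro n hn; simp only [hgdef]; rw [if_neg (by omega)]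
    have hcstep := cycle_step hchain
    have hg0 : g 0 = p := by
      rcases Nat.eq_zero_or_pos m with hm | hm
      · have hpq : p = q := by rw [← hg00, ← hg0m, hm]
        rw [hgge 0 (by omega), hm]
        simp [hpq]
      · rw [hglt 0 hm]; exact hg00
    have hgE : ∀ n, G.edge (g n) (g (n + 1)) ∧
        (G.owner (g n) = i → g (n + 1) = σ.move [] (g n)) := by
      intro n
      rcases lt_trichotomy (n + 1) m with h1 | h1 | h1
      · rw [hglt n (by omega), hglt (n + 1) h1]
        exact hg0E n (by omega)
      · have e2 : g (n + 1) = q := by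
          rw [hgge (n + 1) (by omega), show n + 1 - m = 0 by omega]
          simp
        rw [hglt n (by omega), e2]
        have hthis := hg0E n (by omega)
        rw [show n + 1 = m from h1, hg0m] at hthis
        exact hthis
      · rw [hgge n (by omega), hgge (n + 1) (by omega),
          show n + 1 - m = (n - m) + 1 by omega]
        exact hcstep (n - m)
    obtain ⟨τ, hτ⟩ := mkCounter hσ hg0 hgE
    have hw := hwin τ
    unfold ParityGame.Strategy.WinsAgainst ParityGame.WinsPlaySeq at hw
    have hplay : ParityGame.play (σ.combine τ) p = g := funext hτ
    rw [hplay] at hw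
    set M := (l.map G.priority).foldr max (G.priority q) with hMdef
    have hgreat : IsGreatest {k | {n | G.priority (g n) = k}.Infinite} M := by
      constructor
      · -- M is attained infinitely often
        have hexj : ∃ j, j < l.length + 1 ∧ G.priority ((q :: l).getD j q) = M := by
          rcases foldr_max_mem (l.map G.priority) (G.priority q) with h | h
          · exact ⟨0, by omega, by simp only [List.getD_cons_zero]; rw [hMdef]; exact h.symm⟩
          · obtain ⟨x, hxl, hxp⟩ := List.mem_map.mp h
            obtain ⟨t, ht⟩ := List.mem_iff_get.mp hxl
            refine ⟨t.1 + 1, by omega, ?_⟩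
            rw [List.getD_cons_succ, List.getD_eq_get _ _ ⟨t.1, t.2⟩]
            rw [show (⟨t.1, t.2⟩ : Fin l.length) = t from rfl, ht, hxp]
        obtain ⟨j, hj, hjp⟩ := hexj
        have hmem : ∀ t : ℕ, G.priority (g (m + j + t * (l.length + 1))) = M := by
          intro t
          rw [hgge _ (by omega),
            show m + j + t * (l.length + 1) - m = j + t * (l.length + 1) by omega,
            Nat.add_mul_mod_self_right, Nat.mod_eq_of_lt hj]
          exact hjp
        refine Set.infinite_of_injective_forall_mem
          (f := fun t : ℕ => m + j + t * (l.length + 1)) ?_ ?_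
        · intro a b hab
          simp only at hab
          have h2 : a * (l.length + 1) = b * (l.length + 1) := Nat.add_left_cancel hab
          exact Nat.eq_of_mul_eq_mul_right (by omega) h2
        · intro t
          exact hmem t
      · -- M is an upper bound
        intro k hk
        obtain ⟨n, hn, hmn⟩ := exists_ge_of_infinite hk m
        rw [Set.mem_setOf_eq, hgge n hmn] at hn
        have hj : (n - m) % (l.length + 1) < l.length + 1 := Nat.mod_lt _ (by omega)
        rcases Nat.eq_zero_or_pos ((n - m) % (l.length + 1)) with hj0 | hjpos
        · rw [hj0, List.getD_cons_zero] at hn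
          rw [← hn]
          exact le_foldr_max_base _ _
        · obtain ⟨t, hteq⟩ : ∃ t, (n - m) % (l.length + 1) = t + 1 :=
            ⟨(n - m) % (l.length + 1) - 1, by omega⟩
          have ht : t < l.length := by omega
          rw [hteq, List.getD_cons_succ, List.getD_eq_get _ _ ⟨t, ht⟩] at hn
          rw [← hn]
          exact le_foldr_max_mem (List.mem_map_of_mem (List.get_mem _ _)) _
    have hmax : G.maxInfPriority g = M := hgreat.csSup_eq
    rw [hmax] at hw
    exact fin2_val_ne i (by rw [← hpar, hw])
  · -- no bad cycle implies winning
    intro hnc τ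
    show G.maxInfPriority (ParityGame.play (σ.combine τ) p) % 2 = (i : ℕ)
    have hfE : ∀ n, G.edge (ParityGame.play (σ.combine τ) p n)
        (ParityGame.play (σ.combine τ) p (n + 1)) ∧
        (G.owner (ParityGame.play (σ.combine τ) p n) = i →
          ParityGame.play (σ.combine τ) p (n + 1) =
            σ.move [] (ParityGame.play (σ.combine τ) p n)) := fun n => play_isE hσ τ p n
    set f : ℕ → Pos := ParityGame.play (σ.combine τ) p with hfdef
    have hf0 : f 0 = p := rfl
    have hne : {k | {n | G.priority (f n) = k}.Infinite}.Nonempty := by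
      obtain ⟨x, hx⟩ := Finite.exists_infinite_fiber f
      refine ⟨G.priority x, Set.Infinite.mono ?_ (Set.infinite_coe_iff.mp hx)⟩
      intro n hn
      simp only [Set.mem_preimage, Set.mem_singleton_iff] at hn
      simp [hn]
    have hfin : {k | {n | G.priority (f n) = k}.Infinite}.Finite := by
      apply (Set.finite_range G.priority).subset
      intro k hk
      obtain ⟨n, hn⟩ := hk.nonempty
      exact ⟨f n, hn⟩
    have hbdd := hfin.bddAbove
    set k := sSup {k | {n | G.priority (f n) = k}.Infinite} with hkdef
    have hkmem : k ∈ {k | {n | G.priority (f n) = k}.Infinite} := hne.csSup_mem hfin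
    have hF : {n : ℕ | {j | f j = f n}.Finite}.Finite := by
      have hsub : {n : ℕ | {j | f j = f n}.Finite} ⊆
          ⋃ x ∈ {x : Pos | {j | f j = x}.Finite}, {j | f j = x} := by
        intro n hn
        exact Set.mem_biUnion hn rfl
      exact (Set.Finite.biUnion (Set.toFinite _) fun x hx => hx).subset hsub
    obtain ⟨N, hN⟩ := hF.bddAbove
    have hrec : ∀ n, N < n → {j | f j = f n}.Infinite := by
      intro n hn
      by_contra hc
      rw [Set.not_infinite] at hc
      exact absurd (hN hc) (by omega)
    have hle : ∀ n, N < n → G.priority (f n) ≤ k := by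
      intro n hn
      apply le_csSup hbdd
      refine Set.Infinite.mono ?_ (hrec n hn)
      intro j hj
      simp only [Set.mem_setOf_eq] at hj ⊢
      rw [hj]
    obtain ⟨n₀, hn₀mem, hn₀⟩ := exists_ge_of_infinite hkmem (N + 1)
    rw [Set.mem_setOf_eq] at hn₀mem
    obtain ⟨m, hmmem, hm⟩ := exists_ge_of_infinite (hrec n₀ (by omega)) (n₀ + 1)
    rw [Set.mem_setOf_eq] at hmmem
    have hchain0 := chainSeg
      (R := fun x y => G.edge x y ∧ (G.owner x = i → y = σ.move [] x))
      (f := f) (fun n => hfE n) (m - n₀ - 1) n₀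
    rw [show n₀ + (m - n₀ - 1) + 1 = m by omega, hmmem] at hchain0
    have hreach : Relation.ReflTransGen
        (fun x y => G.edge x y ∧ (G.owner x = i → y = σ.move [] x)) p (f n₀) := by
      have hr := path_reach
        (R := fun x y => G.edge x y ∧ (G.owner x = i → y = σ.move [] x))
        (f := f) (fun n => hfE n) n₀
      rwa [hf0] at hr
    have hfold : (((List.range (m - n₀ - 1)).map (fun j => f (n₀ + j + 1))).map
        G.priority).foldr max (G.priority (f n₀)) = k := by
      apply le_antisymm
      · apply foldr_max_le (le_of_eq hn₀mem)
        intro a ha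
        rw [List.map_map] at ha
        obtain ⟨j, hj, rfl⟩ := List.mem_map.mp ha
        rw [List.mem_range] at hj
        exact hle _ (by omega)
      · rw [← hn₀mem]
        exact le_foldr_max_base _ _
    have hk2 : ¬ (k % 2 = ((1 - i : Fin 2) : ℕ)) := by
      intro hbad
      exact hnc ⟨f n₀, (List.range (m - n₀ - 1)).map (fun j => f (n₀ + j + 1)),
        hreach, hchain0, by rw [hfold]; exact hbad⟩
    have hmaxk : G.maxInfPriority f = k := rfl
    rw [hmaxk]
    have h2 := Nat.mod_two_eq_zero_or_one k
    fin_cases i <;> simp_all <;> omega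


end MuCalc
end

section
/- Let Σ and Σ′ be partial winning strategies for the game G(T,η). Then Σ+Σ′, defined by (Σ+Σ′)(φ,s) = Σ(φ,s) if (φ,s) ∈ dom(Σ) and Σ′(φ,s) otherwise, is a partial winning strategy, and dom(Σ+Σ′) = dom(Σ) ∪ dom(Σ′). -/
set_option maxHeartbeats 1000000

namespace MuCalc

attribute [local instance] Classical.propDecidable

variable {S Var Prp Act : Type*}

section Aux

lemma pwsAdd_left {sg sg' : PStrat S Var Prp Act} {q} (h : sg q ≠ none) :
    pwsAdd sg sg' q = sg q := by
  obtain ⟨a, ha⟩ := Option.ne_none_iff_exists'.mp h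
  simp [pwsAdd, ha]

lemma pwsAdd_right {sg sg' : PStrat S Var Prp Act} {q} (h : sg q = none) :
    pwsAdd sg sg' q = sg' q := by simp [pwsAdd, h]

lemma pwsAdd_none {sg sg' : PStrat S Var Prp Act} {q} :
    pwsAdd sg sg' q = none ↔ sg q = none ∧ sg' q = none := by
  cases h : sg q <;> simp [pwsAdd, h]

lemma inducedMove_congr (T : LTS S Prp Act) {sg sg' : PStrat S Var Prp Act}
    (q : S × Formula Var Prp Act) (h : sg q = sg' q) :
    inducedMove T sg q = inducedMove T sg' q := by
  obtain ⟨s, φ⟩ := q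
  cases φ <;> first | rfl | (simp only [inducedMove]; rw [h])

lemma inducedMove_edge (T : LTS S Prp Act) (sg : PStrat S Var Prp Act)
    (q : S × Formula Var Prp Act) : gameMove T q (inducedMove T sg q) := by
  obtain ⟨s, φ⟩ := q
  cases φ with
  | var X => exact rfl
  | prop P => exact rfl
  | and φ ψ => exact Or.inl rfl
  | or φ ψ =>
    show inducedMove T sg (s, .or φ ψ) = (s, φ) ∨ inducedMove T sg (s, .or φ ψ) = (s, ψ)
    rw [inducedMove]
    split
    · exact Or.inr rfl
    · exact Or.inl rfl
  | box a φ => exact ⟨rfl, (T.total a s).choose_spec⟩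
  | dia a φ =>
    show (inducedMove T sg (s, .dia a φ)).2 = φ ∧ T.trans a s (inducedMove T sg (s, .dia a φ)).1
    rw [inducedMove]
    split
    next hh => exact ⟨rfl, hh.choose_spec.2⟩
    next => exact ⟨rfl, (T.total a s).choose_spec⟩
  | mu X φ => exact rfl
  | nu X φ => exact rfl

/-- Trap lemma: from a position in the domain, the induced move stays in the
domain, and at opponent positions all moves stay in the domain. -/
lemma trap {T : LTS S Prp Act} {η : Var → Set S} {sg : PStrat S Var Prp Act}
    (h : IsPWS T η sg) {q : S × Formula Var Prp Act} (hq : sg q ≠ none) :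
    sg (inducedMove T sg q) ≠ none ∧
      (gameOwner q ≠ 0 → ∀ r, gameMove T q r → sg r ≠ none) := by
  obtain ⟨s, φ⟩ := q
  obtain ⟨a, ha⟩ := Option.ne_none_iff_exists'.mp hq
  cases a with
  | star =>
    exact ⟨h.star s φ ha _ (inducedMove_edge T sg (s, φ)), fun _ r hr => h.star s φ ha r hr⟩
  | one =>
    obtain ⟨φ₁, φ₂, rfl, hd⟩ := h.or_one s φ ha
    refine ⟨?_, fun how => absurd rfl how⟩
    show sg (inducedMove T sg (s, .or φ₁ φ₂)) ≠ none
    rw [inducedMove, ha, if_neg (by simp)]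
    exact hd
  | two =>
    obtain ⟨φ₁, φ₂, rfl, hd⟩ := h.or_two s φ ha
    refine ⟨?_, fun how => absurd rfl how⟩
    show sg (inducedMove T sg (s, .or φ₁ φ₂)) ≠ none
    rw [inducedMove, ha, if_pos rfl]
    exact hd
  | state t =>
    obtain ⟨b, ψ, rfl, htr, hd⟩ := h.dia s φ t ha
    refine ⟨?_, fun how => absurd rfl how⟩
    show sg (inducedMove T sg (s, .dia b ψ)) ≠ none
    rw [inducedMove]
    have hc : ∃ t', sg (s, .dia b ψ) = some (.state t') ∧ T.trans b s t' := ⟨t, ha, htr⟩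
    rw [dif_pos hc]
    have : hc.choose = t := by
      have h1 := hc.choose_spec.1.symm.trans ha
      injection h1 with h2
      injection h2
    rw [this]
    exact hd

variable {T : LTS S Prp Act} {η : Var → Set S}

lemma fin_two_cases (x : Fin 2) (hx : x ≠ 0) : x = 1 := by omega

/-- If the play of the induced strategy of `pwsAdd sg sg'` ever hits `dom sg`,
Player 0 wins the play. -/
lemma winsL1 {sg sg' : PStrat S Var Prp Act} (h : IsPWS T η sg)
    (τ : (T.game η).Strategy (1 - 0)) (q : S × Formula Var Prp Act) (m : ℕ)
    (hm : sg (ParityGame.play ((inducedStrategy T η (pwsAdd sg sg')).combine τ) q m) ≠ none) :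
    (T.game η).WinsPlaySeq 0
      (ParityGame.play ((inducedStrategy T η (pwsAdd sg sg')).combine τ) q) := by
  set f := (inducedStrategy T η (pwsAdd sg sg')).combine τ with hf
  set p := ParityGame.play f q m with hp
  set pre := (ParityGame.playHist f q m).2 with hpre
  have tval : ∀ (hl : List (S × Formula Var Prp Act)) r, (T.game η).owner r = 1 - 0 →
      (T.game η).edge r (τ.move (pre ++ hl) r) := fun hl r hr => τ.valid _ r hr
  set τ' : (T.game η).Strategy (1 - 0) := ⟨fun hl r => τ.move (pre ++ hl) r, tval⟩ with hτ'
  set f' := (inducedStrategy T η sg).combine τ' with hf'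
  have key : ∀ n, ParityGame.playHist f q (m + n)
      = ((ParityGame.playHist f' p n).1, pre ++ (ParityGame.playHist f' p n).2)
      ∧ sg ((ParityGame.playHist f' p n).1) ≠ none := by
    intro n
    induction n with
    | zero =>
      refine ⟨?_, hm⟩
      show ParityGame.playHist f q m = (p, pre ++ [])
      rw [List.append_nil]
      rfl
    | succ n ih =>
      obtain ⟨ihEq, ihMem⟩ := ih
      set r := (ParityGame.playHist f' p n).1 with hr
      set hl := (ParityGame.playHist f' p n).2 with hhl
      have hplay1 : ParityGame.playHist f q (m + (n + 1))
          = (f (pre ++ hl) r, (pre ++ hl) ++ [r]) := by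
        show ParityGame.playHist f q ((m + n) + 1) = _
        rw [ParityGame.playHist, ihEq]
      have hplay2 : ParityGame.playHist f' p (n + 1) = (f' hl r, hl ++ [r]) := rfl
      by_cases how : (T.game η).owner r = 0
      · have hmv : f (pre ++ hl) r = f' hl r := by
          show (if (T.game η).owner r = (0 : Fin 2) then inducedMove T (pwsAdd sg sg') r
              else τ.move (pre ++ hl) r)
            = (if (T.game η).owner r = (0 : Fin 2) then inducedMove T sg r else τ'.move hl r)
          rw [if_pos how, if_pos how]
          exact inducedMove_congr T r (pwsAdd_left ihMem)
        have hmem : sg (f' hl r) ≠ none := by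
          have : f' hl r = inducedMove T sg r := by
            show (if (T.game η).owner r = (0 : Fin 2) then inducedMove T sg r
              else τ'.move hl r) = _
            rw [if_pos how]
          rw [this]
          exact (trap h ihMem).1
        refine ⟨?_, by rw [hplay2]; exact hmem⟩
        rw [hplay1, hplay2, hmv, List.append_assoc]
      · have hmv : f (pre ++ hl) r = f' hl r := by
          show (if (T.game η).owner r = (0 : Fin 2) then inducedMove T (pwsAdd sg sg') r
              else τ.move (pre ++ hl) r)
            = (if (T.game η).owner r = (0 : Fin 2) then inducedMove T sg r else τ'.move hl r)
          rw [if_neg how, if_neg how]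
        have hedge : (T.game η).edge r (τ'.move hl r) :=
          τ'.valid hl r (by rw [fin_two_cases _ how]; decide)
        have hmem : sg (f' hl r) ≠ none := by
          have hfr : f' hl r = τ'.move hl r := by
            show (if (T.game η).owner r = (0 : Fin 2) then inducedMove T sg r
              else τ'.move hl r) = _
            rw [if_neg how]
          rw [hfr]
          exact (trap h ihMem).2 how _ hedge
        refine ⟨?_, by rw [hplay2]; exact hmem⟩
        rw [hplay1, hplay2, hmv, List.append_assoc]
  have hfun : (fun n => ParityGame.play f q (m + n)) = ParityGame.play f' p :=
    funext fun n => by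
      show (ParityGame.playHist f q (m + n)).1 = (ParityGame.playHist f' p n).1
      rw [(key n).1]
  have hwin := h.win p hm τ'
  have hshift : ∀ (g : ℕ → S × Formula Var Prp Act),
      (T.game η).maxInfPriority (fun n => g (m + n)) = (T.game η).maxInfPriority g := by
    intro g
    unfold ParityGame.maxInfPriority
    congr 1
    ext k
    constructor
    · intro hI
      have him := hI.image (f := (m + ·)) (Set.injOn_of_injective (add_right_injective m))
      exact him.mono (by rintro n ⟨j, hj, rfl⟩; exact hj)
    · intro hI
      apply Set.Infinite.of_image (f := (m + ·))
      apply Set.Infinite.mono (s := {n | (T.game η).priority (g n) = k} \ Set.Iio m)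
      · rintro n ⟨hn, hn2⟩
        simp only [Set.mem_Iio, not_lt] at hn2
        exact ⟨n - m, by simpa [Nat.add_sub_cancel' hn2] using hn, by show m + (n - m) = n; omega⟩
      · exact hI.diff (Set.finite_Iio m)
  show (T.game η).maxInfPriority (ParityGame.play f q) % 2 = (0 : Fin 2).val
  rw [← hshift (ParityGame.play f q), hfun]
  exact hwin

/-- If the play never hits `dom sg` but starts in `dom sg'`, Player 0 wins. -/
lemma winsL2 {sg sg' : PStrat S Var Prp Act} (h' : IsPWS T η sg')
    (τ : (T.game η).Strategy (1 - 0)) (q : S × Formula Var Prp Act)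
    (hq : sg' q ≠ none)
    (hall : ∀ n, sg (ParityGame.play ((inducedStrategy T η (pwsAdd sg sg')).combine τ) q n)
      = none) :
    (T.game η).WinsPlaySeq 0
      (ParityGame.play ((inducedStrategy T η (pwsAdd sg sg')).combine τ) q) := by
  set f := (inducedStrategy T η (pwsAdd sg sg')).combine τ with hf
  set f' := (inducedStrategy T η sg').combine τ with hf'
  have key : ∀ n, ParityGame.playHist f q n = ParityGame.playHist f' q n
      ∧ sg' ((ParityGame.playHist f' q n).1) ≠ none := by
    intro n
    induction n with
    | zero => exact ⟨rfl, hq⟩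
    | succ n ih =>
      obtain ⟨ihEq, ihMem⟩ := ih
      set r := (ParityGame.playHist f' q n).1 with hr
      set hl := (ParityGame.playHist f' q n).2 with hhl
      have hnone : sg r = none := by
        have := hall n
        show sg ((ParityGame.playHist f' q n).1) = none
        rw [← ihEq]
        exact this
      have hplay1 : ParityGame.playHist f q (n + 1) = (f hl r, hl ++ [r]) := by
        rw [ParityGame.playHist, ihEq]
      have hplay2 : ParityGame.playHist f' q (n + 1) = (f' hl r, hl ++ [r]) := rfl
      by_cases how : (T.game η).owner r = 0
      · have hmv : f hl r = f' hl r := by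
          show (if (T.game η).owner r = (0 : Fin 2) then inducedMove T (pwsAdd sg sg') r
              else τ.move hl r)
            = (if (T.game η).owner r = (0 : Fin 2) then inducedMove T sg' r else τ.move hl r)
          rw [if_pos how, if_pos how]
          exact inducedMove_congr T r (pwsAdd_right hnone)
        have hmem : sg' (f' hl r) ≠ none := by
          have : f' hl r = inducedMove T sg' r := by
            show (if (T.game η).owner r = (0 : Fin 2) then inducedMove T sg' r
              else τ.move hl r) = _
            rw [if_pos how]
          rw [this]
          exact (trap h' ihMem).1
        exact ⟨by rw [hplay1, hplay2, hmv], by rw [hplay2]; exact hmem⟩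
      · have hmv : f hl r = f' hl r := by
          show (if (T.game η).owner r = (0 : Fin 2) then inducedMove T (pwsAdd sg sg') r
              else τ.move hl r)
            = (if (T.game η).owner r = (0 : Fin 2) then inducedMove T sg' r else τ.move hl r)
          rw [if_neg how, if_neg how]
        have hedge : (T.game η).edge r (τ.move hl r) :=
          τ.valid hl r (by rw [fin_two_cases _ how]; decide)
        have hmem : sg' (f' hl r) ≠ none := by
          have hfr : f' hl r = τ.move hl r := by
            show (if (T.game η).owner r = (0 : Fin 2) then inducedMove T sg' r
              else τ.move hl r) = _
            rw [if_neg how]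
          rw [hfr]
          exact (trap h' ihMem).2 how _ hedge
        exact ⟨by rw [hplay1, hplay2, hmv], by rw [hplay2]; exact hmem⟩
  have hfun : ParityGame.play f q = ParityGame.play f' q :=
    funext fun n => by
      show (ParityGame.playHist f q n).1 = (ParityGame.playHist f' q n).1
      rw [(key n).1]
  show (T.game η).WinsPlaySeq 0 (ParityGame.play f q)
  rw [hfun]
  exact h'.win q hq τ

lemma pwsAdd_ne_left {sg sg' : PStrat S Var Prp Act} {q} (h : sg q ≠ none) :
    pwsAdd sg sg' q ≠ none := fun hc => h (pwsAdd_none.mp hc).1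

lemma pwsAdd_ne_right {sg sg' : PStrat S Var Prp Act} {q} (h : sg' q ≠ none) :
    pwsAdd sg sg' q ≠ none := fun hc => h (pwsAdd_none.mp hc).2

lemma pwsAdd_cases {sg sg' : PStrat S Var Prp Act} {q} {a : Advice S}
    (ha : pwsAdd sg sg' q = some a) :
    sg q = some a ∨ (sg q = none ∧ sg' q = some a) := by
  cases hc : sg q with
  | none => exact Or.inr ⟨rfl, (pwsAdd_right hc).symm.trans ha⟩
  | some b =>
    left
    have hb := pwsAdd_left (q := q) (sg := sg) (sg' := sg')
      (by rw [hc]; exact Option.some_ne_none b)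
    rw [hc] at hb
    exact hb.symm.trans ha

end Aux

/-- the sum `Σ + Σ'` of two partial winning strategies is a partial
winning strategy with `dom(Σ+Σ') = dom(Σ) ∪ dom(Σ')`. -/
theorem pwsAdd_isPWS {S Var Prp Act : Type*} (T : LTS S Prp Act) (η : Var → Set S)
    (sg sg' : PStrat S Var Prp Act) (h : IsPWS T η sg) (h' : IsPWS T η sg') :
    IsPWS T η (pwsAdd sg sg') ∧
      PStrat.dom (pwsAdd sg sg') = PStrat.dom sg ∪ PStrat.dom sg' := by
  constructor
  · refine ⟨?_, ?_, ?_, ?_, ?_⟩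
    · -- STAR
      intro s φ ha r hr
      rcases pwsAdd_cases ha with hl | ⟨_, hrt⟩
      · exact pwsAdd_ne_left (h.star s φ hl r hr)
      · exact pwsAdd_ne_right (h'.star s φ hrt r hr)
    · -- OR (left)
      intro s φ ha
      rcases pwsAdd_cases ha with hl | ⟨_, hrt⟩
      · obtain ⟨φ₁, φ₂, rfl, hd⟩ := h.or_one s φ hl
        exact ⟨φ₁, φ₂, rfl, pwsAdd_ne_left hd⟩
      · obtain ⟨φ₁, φ₂, rfl, hd⟩ := h'.or_one s φ hrt
        exact ⟨φ₁, φ₂, rfl, pwsAdd_ne_right hd⟩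
    · -- OR (right)
      intro s φ ha
      rcases pwsAdd_cases ha with hl | ⟨_, hrt⟩
      · obtain ⟨φ₁, φ₂, rfl, hd⟩ := h.or_two s φ hl
        exact ⟨φ₁, φ₂, rfl, pwsAdd_ne_left hd⟩
      · obtain ⟨φ₁, φ₂, rfl, hd⟩ := h'.or_two s φ hrt
        exact ⟨φ₁, φ₂, rfl, pwsAdd_ne_right hd⟩
    · -- DIA
      intro s φ t ha
      rcases pwsAdd_cases ha with hl | ⟨_, hrt⟩
      · obtain ⟨a, ψ, rfl, htr, hd⟩ := h.dia s φ t hl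
        exact ⟨a, ψ, rfl, htr, pwsAdd_ne_left hd⟩
      · obtain ⟨a, ψ, rfl, htr, hd⟩ := h'.dia s φ t hrt
        exact ⟨a, ψ, rfl, htr, pwsAdd_ne_right hd⟩
    · -- WIN
      intro r hr τ
      by_cases hex : ∃ n,
          sg (ParityGame.play ((inducedStrategy T η (pwsAdd sg sg')).combine τ) r n) ≠ none
      · obtain ⟨m, hm⟩ := hex
        exact winsL1 h τ r m hm
      · push_neg at hex
        have h0 : sg r = none := hex 0
        have hq' : sg' r ≠ none := fun hc => hr (pwsAdd_none.mpr ⟨h0, hc⟩)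
        exact winsL2 h' τ r hq' hex
  · ext q
    show pwsAdd sg sg' q ≠ none ↔ sg q ≠ none ∨ sg' q ≠ none
    rw [← not_and_or, not_iff_not]
    exact pwsAdd_none

end MuCalc
end
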